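/- Let K ≥ 1 and let a class hierarchy over the K classes be given by a finite index type J, a map v : J → Finset (Fin K) with v j nonempty for every j, and weights w : J → ℝ with 0 ≤ w j. If the weighting is not balanced, i.e. there exist classes k₁, k₂ with ∑_{j : k₁ ∈ v j} w j ≠ ∑_{j : k₂ ∈ v j} w j, then the hierarchical loss ℓ(f, y) = −∑_{j : y ∈ v j} w j · log(∑_{l ∈ v j} f l) is not a proper scoring rule: for every strictly positive probability vector π on Fin K there exists a strictly positive probability vector f on Fin K with ∑_{k} π k · ℓ(f, k) < ∑_{k} π k · ℓ(π, k). -/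

import Mathlib

private lemma log_ge_aux (x : ℝ) (hx : -(1/2) ≤ x) : x - 2*x^2 ≤ Real.log (1+x) := by
  have h1 : (0:ℝ) < 1 + x := by linarith
  have h2 : Real.log (1+x)⁻¹ ≤ (1+x)⁻¹ - 1 := Real.log_le_sub_one_of_pos (by positivity)
  rw [Real.log_inv] at h2
  have h3 : x/(1+x) ≤ Real.log (1+x) := by
    have e : (1+x)⁻¹ - 1 = -(x/(1+x)) := by field_simp; ring
    rw [e] at h2; linarith
  have h4 : x - 2*x^2 ≤ x/(1+x) := by
    rw [le_div_iff₀ h1]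
    nlinarith [mul_nonneg (sq_nonneg x) (by linarith : (0:ℝ) ≤ 1 + 2*x)]
  linarith

private lemma log_key (p d : ℝ) (hp : 0 < p) (h1 : -(p/2) ≤ d) (h2 : d ≤ p/2) :
    d - 2*d^2/p ≤ p * (Real.log (p+d) - Real.log p) := by
  have hpd : 0 < p + d := by linarith
  have hx : -(1/2) ≤ d/p := by rw [le_div_iff₀ hp]; linarith
  have h3 := log_ge_aux (d/p) hx
  have e : 1 + d/p = (p+d)/p := by field_simp
  rw [e, Real.log_div hpd.ne' hp.ne'] at h3
  have h5 := mul_le_mul_of_nonneg_left h3 hp.le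
  have e2 : p * (d/p - 2*(d/p)^2) = d - 2*d^2/p := by field_simp
  rw [e2] at h5
  linarith

private lemma case_aux (ε w p m A B s : ℝ) (hw : 0 ≤ w) (hs : s^2 = ε^2)
    (hdiv : 2*ε^2/p ≤ 2*ε^2/m)
    (hk : s - 2*s^2/p ≤ p * (A - B)) :
    s*w - 2*ε^2/m * w ≤ w * (p * A) - w * (p * B) := by
  have f1 := mul_le_mul_of_nonneg_left hk hw
  have f2 := mul_le_mul_of_nonneg_left hdiv hw
  have e1 : w * (s - 2*s^2/p) = s*w - w*(2*ε^2/p) := by rw [show s^2 = ε^2 from hs]; ring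
  have e2 : w * (p * (A - B)) = w * (p*A) - w * (p*B) := by ring
  rw [e1, e2] at f1
  linarith

private lemma core {K : ℕ} {J : Type*} [Fintype J]
    (v : J → Finset (Fin K)) (hne : ∀ j, (v j).Nonempty)
    (w : J → ℝ) (hw : ∀ j, 0 ≤ w j) (a b : Fin K)
    (π : Fin K → ℝ) (hπ : ∀ k, 0 < π k) (hπ1 : ∑ k, π k = 1)
    (hab : ∑ j ∈ Finset.univ.filter (fun j => b ∈ v j), w j
      < ∑ j ∈ Finset.univ.filter (fun j => a ∈ v j), w j) :
    ∃ f : Fin K → ℝ, (∀ k, 0 < f k) ∧ ∑ k, f k = 1 ∧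
      ∑ j, w j * ((∑ l ∈ v j, π l) * Real.log (∑ l ∈ v j, π l)) <
      ∑ j, w j * ((∑ l ∈ v j, π l) * Real.log (∑ l ∈ v j, f l)) := by
  obtain ⟨k₀, -, hk₀⟩ := Finset.exists_min_image Finset.univ π ⟨a, Finset.mem_univ a⟩
  set m := π k₀ with hm
  have hm0 : 0 < m := hπ k₀
  have hmle : ∀ k, m ≤ π k := fun k => hk₀ k (Finset.mem_univ k)
  set W := ∑ j, w j with hW
  have hW0 : 0 ≤ W := Finset.sum_nonneg fun j _ => hw j
  set ca := ∑ j ∈ Finset.univ.filter (fun j => a ∈ v j), w j with hca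
  set cb := ∑ j ∈ Finset.univ.filter (fun j => b ∈ v j), w j with hcb
  set D := ca - cb with hD
  have hD0 : 0 < D := by rw [hD]; linarith
  have hab' : a ≠ b := by rintro rfl; exact lt_irrefl _ hab
  set ε := min (m/2) (m*D/(4*W+1)) with hε
  have hε0 : 0 < ε := lt_min (by positivity) (by positivity)
  have hε1 : ε ≤ m/2 := min_le_left _ _
  have hε2 : ε * (4*W+1) ≤ m*D := by
    rw [← le_div_iff₀ (by positivity)]; exact min_le_right _ _
  set f : Fin K → ℝ := fun k => π k + (if k = a then ε else 0) - (if k = b then ε else 0)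
    with hf
  have hS : ∀ j, ∑ l ∈ v j, f l
      = (∑ l ∈ v j, π l) + (if a ∈ v j then ε else 0) - (if b ∈ v j then ε else 0) := by
    intro j
    simp [hf, Finset.sum_add_distrib, Finset.sum_sub_distrib, Finset.sum_ite_eq']
  have hpj : ∀ j, m ≤ ∑ l ∈ v j, π l := by
    intro j
    obtain ⟨l, hl⟩ := hne j
    calc m ≤ π l := hmle l
      _ ≤ ∑ l ∈ v j, π l := Finset.single_le_sum (fun i _ => (hπ i).le) hl
  refine ⟨f, ?_, ?_, ?_⟩
  · intro k
    have h1 := hπ k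
    have h2 := hmle k
    simp only [hf]
    split_ifs <;> linarith
  · simp [hf, Finset.sum_add_distrib, Finset.sum_sub_distrib, Finset.sum_ite_eq', hπ1]
  · rw [← sub_pos, ← Finset.sum_sub_distrib]
    have hkey : ∀ j ∈ Finset.univ,
        ε * ((if a ∈ v j then w j else 0) - (if b ∈ v j then w j else 0)) - (2*ε^2/m) * w j
        ≤ w j * ((∑ l ∈ v j, π l) * Real.log (∑ l ∈ v j, f l))
          - w j * ((∑ l ∈ v j, π l) * Real.log (∑ l ∈ v j, π l)) := by
      intro j _
      have hp := hpj j
      have hp0 : 0 < ∑ l ∈ v j, π l := lt_of_lt_of_le hm0 hp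
      have hdiv : 2*ε^2/(∑ l ∈ v j, π l) ≤ 2*ε^2/m :=
        div_le_div_of_nonneg_left (by positivity) hm0 hp
      have hnn : 0 ≤ 2*ε^2/m := by positivity
      rw [hS j]
      by_cases ha : a ∈ v j <;> by_cases hb : b ∈ v j <;>
        simp only [ha, hb, if_true, if_false, sub_zero, add_zero, add_sub_cancel_right]
      · nlinarith [mul_nonneg hnn (hw j)]
      · have hk := log_key (∑ l ∈ v j, π l) ε hp0 (by linarith) (by linarith)
        have := case_aux ε (w j) (∑ l ∈ v j, π l) m
          (Real.log ((∑ l ∈ v j, π l) + ε)) (Real.log (∑ l ∈ v j, π l)) ε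
          (hw j) rfl hdiv hk
        linarith
      · have hk := log_key (∑ l ∈ v j, π l) (-ε) hp0 (by linarith) (by linarith)
        rw [show (∑ l ∈ v j, π l) + -ε = (∑ l ∈ v j, π l) - ε by ring] at hk
        have := case_aux ε (w j) (∑ l ∈ v j, π l) m
          (Real.log ((∑ l ∈ v j, π l) - ε)) (Real.log (∑ l ∈ v j, π l)) (-ε)
          (hw j) (by ring) hdiv hk
        linarith
      · nlinarith [mul_nonneg hnn (hw j)]
    calc (0:ℝ)
        < ε * D - (2*ε^2/m) * W := by
          have h7 : (2*ε^2/m)*W < ε*D := by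
            rw [div_mul_eq_mul_div, div_lt_iff₀ hm0]
            nlinarith [mul_le_mul_of_nonneg_left hε2 hε0.le, mul_pos hε0 hε0,
              mul_nonneg (mul_nonneg hε0.le hε0.le) hW0]
          linarith
      _ = ∑ j, (ε * ((if a ∈ v j then w j else 0) - (if b ∈ v j then w j else 0))
            - (2*ε^2/m) * w j) := by
          have hfa : ∀ (c : Fin K), (∑ j, if c ∈ v j then w j else 0)
              = ∑ j ∈ Finset.univ.filter (fun j => c ∈ v j), w j :=
            fun c => (Finset.sum_filter _ _).symm
          rw [Finset.sum_sub_distrib, ← Finset.mul_sum, Finset.sum_sub_distrib,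
            hfa a, hfa b, ← Finset.mul_sum, ← hca, ← hcb, ← hW, ← hD]
      _ ≤ _ := Finset.sum_le_sum hkey

private lemma swap_sum {K : ℕ} {J : Type*} [Fintype J]
    (v : J → Finset (Fin K)) (w : J → ℝ) (π g : Fin K → ℝ) :
    ∑ k, π k * (-(∑ j ∈ Finset.univ.filter (fun j => k ∈ v j),
        w j * Real.log (∑ l ∈ v j, g l)))
      = -(∑ j, w j * ((∑ l ∈ v j, π l) * Real.log (∑ l ∈ v j, g l))) := by
  have h : ∑ k, π k * (∑ j ∈ Finset.univ.filter (fun j => k ∈ v j),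
      w j * Real.log (∑ l ∈ v j, g l))
      = ∑ j, w j * ((∑ l ∈ v j, π l) * Real.log (∑ l ∈ v j, g l)) := by
    simp only [Finset.sum_filter, Finset.mul_sum, mul_ite, mul_zero]
    rw [Finset.sum_comm]
    refine Finset.sum_congr rfl fun j _ => ?_
    rw [← Finset.sum_filter, Finset.filter_univ_mem, ← Finset.sum_mul]
    ring
  simp only [mul_neg, Finset.sum_neg_distrib, h]

/-- If the nonnegative weighting of a class hierarchy (with nonempty nodes) is not balanced,
then the hierarchical loss is not a proper scoring rule: for every strictly positive
probability vector `π` there is a strictly positive probability vector `f` whose expected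
loss under `π` is strictly smaller than that of `π` itself. -/
theorem hierarchical_loss_not_proper_of_not_balanced
    {K : ℕ} (hK : 1 ≤ K) {J : Type*} [Fintype J]
    (v : J → Finset (Fin K)) (hne : ∀ j, (v j).Nonempty)
    (w : J → ℝ) (hw : ∀ j, 0 ≤ w j)
    (k₁ k₂ : Fin K)
    (hunbal : ∑ j ∈ Finset.univ.filter (fun j => k₁ ∈ v j), w j
      ≠ ∑ j ∈ Finset.univ.filter (fun j => k₂ ∈ v j), w j) :
    ∀ π : Fin K → ℝ, (∀ k, 0 < π k) → ∑ k, π k = 1 →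
      ∃ f : Fin K → ℝ, (∀ k, 0 < f k) ∧ ∑ k, f k = 1 ∧
        ∑ k, π k * (-(∑ j ∈ Finset.univ.filter (fun j => k ∈ v j),
            w j * Real.log (∑ l ∈ v j, f l)))
          < ∑ k, π k * (-(∑ j ∈ Finset.univ.filter (fun j => k ∈ v j),
            w j * Real.log (∑ l ∈ v j, π l))) := by
  intro π hπ hπ1
  rcases lt_or_gt_of_ne hunbal with h | h
  · obtain ⟨f, h1, h2, h3⟩ := core v hne w hw k₂ k₁ π hπ hπ1 h
    refine ⟨f, h1, h2, ?_⟩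
    rw [swap_sum v w π f, swap_sum v w π π]
    exact neg_lt_neg h3
  · obtain ⟨f, h1, h2, h3⟩ := core v hne w hw k₁ k₂ π hπ hπ1 h
    refine ⟨f, h1, h2, ?_⟩
    rw [swap_sum v w π f, swap_sum v w π π]
    exact neg_lt_neg h3
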